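/- (Unobservability of rotation about the gravity vector.) Fix g ∈ ℝ³. Let A be the 12×12 real matrix, written in 3×3 blocks indexed 1..4, whose only nonzero blocks are A₂₁ = ĝ and A₃₂ = I₃, and let H be the 3×12 matrix with blocks (0₃, 0₃, −I₃, I₃). Then for every t ∈ ℝ and every α ∈ ℝ, H * exp_m(A t) * u = 0, where u ∈ ℝ¹² is the vector with block components (α g, 0, 0, 0). Hence orientation error in the direction of the gravity vector (yaw) lies in the kernel of every row block of the observability matrix. -/

import Mathlib

open Matrix

/-- The skew-symmetric (hat) matrix of a vector `φ ∈ ℝ³`, so that `skew φ *ᵥ x = φ × x`. -/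
noncomputable def skew (φ : Fin 3 → ℝ) : Matrix (Fin 3) (Fin 3) ℝ :=
  !![0, -φ 2, φ 1; φ 2, 0, -φ 0; -φ 1, φ 0, 0]

/-- Assemble a 12×12 matrix from a 4×4 array of 3×3 blocks. -/
noncomputable def B4 (M : Fin 4 → Fin 4 → Matrix (Fin 3) (Fin 3) ℝ) :
    Matrix (Fin 12) (Fin 12) ℝ := fun i j =>
  M ⟨(i : ℕ) / 3, by have := i.isLt; omega⟩ ⟨(j : ℕ) / 3, by have := j.isLt; omega⟩
    ⟨(i : ℕ) % 3, by omega⟩ ⟨(j : ℕ) % 3, by omega⟩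

/-- The linearized right-invariant error dynamics matrix: the 12×12 block matrix whose only
nonzero blocks are `A₂₁ = ĝ` and `A₃₂ = I₃`. -/
noncomputable def A12 (g : Fin 3 → ℝ) : Matrix (Fin 12) (Fin 12) ℝ :=
  B4 ![![0, 0, 0, 0], ![skew g, 0, 0, 0], ![0, 1, 0, 0], ![0, 0, 0, 0]]

/-- The forward-kinematics observation matrix: the 3×12 matrix with 3×3 blocks
`(0, 0, -I₃, I₃)`. -/
noncomputable def H312 : Matrix (Fin 3) (Fin 12) ℝ := fun i j =>
  (![0, 0, -1, 1] : Fin 4 → Matrix (Fin 3) (Fin 3) ℝ)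
    ⟨(j : ℕ) / 3, by have := j.isLt; omega⟩ i ⟨(j : ℕ) % 3, by omega⟩

/-- Assemble a vector in `ℝ¹²` from four block components in `ℝ³`. -/
noncomputable def vec4 (x : Fin 4 → Fin 3 → ℝ) : Fin 12 → ℝ := fun j =>
  x ⟨(j : ℕ) / 3, by have := j.isLt; omega⟩ ⟨(j : ℕ) % 3, by omega⟩

attribute [local instance] Matrix.linftyOpNormedRing Matrix.linftyOpNormedAlgebra

/-- If `u` is in the kernel of `M`, then `exp M *ᵥ u = u`. -/
lemma exp_mulVec_of_kernel {n : ℕ} (M : Matrix (Fin n) (Fin n) ℝ) (u : Fin n → ℝ)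
    (h : M *ᵥ u = 0) : NormedSpace.exp M *ᵥ u = u := by
  have hpow : ∀ k : ℕ, M ^ k *ᵥ u = if k = 0 then u else 0 := by
    intro k
    induction k with
    | zero => simp
    | succ k ih =>
      rw [pow_succ, ← Matrix.mulVec_mulVec, h]
      simp
  let f : Matrix (Fin n) (Fin n) ℝ →ₗ[ℝ] (Fin n → ℝ) :=
    { toFun := fun X => X *ᵥ u
      map_add' := fun X Y => Matrix.add_mulVec X Y u
      map_smul' := fun c X => Matrix.smul_mulVec c X u }
  have hf : Continuous f := f.continuous_of_finiteDimensional
  have hs : Summable (fun k : ℕ => ((k.factorial : ℝ)⁻¹) • M ^ k) :=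
    NormedSpace.expSeries_summable' M
  have key : f (NormedSpace.exp M) = ∑' k : ℕ, f (((k.factorial : ℝ)⁻¹) • M ^ k) := by
    rw [NormedSpace.exp_eq_tsum (𝕂 := ℝ)]
    exact (hs.hasSum.map f hf).tsum_eq.symm
  have h2 : (NormedSpace.exp M) *ᵥ u = ∑' k : ℕ, ((k.factorial : ℝ)⁻¹) • (M ^ k *ᵥ u) := by
    simpa [f, Matrix.smul_mulVec] using key
  rw [h2, tsum_eq_single 0]
  · simp [hpow]
  · intro k hk
    simp [hpow, hk]

/-- Decompose a sum over `Fin 12` into blocks of size 3. -/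
lemma sum_fin12 (f : Fin 4 → Fin 3 → ℝ) :
    ∑ k : Fin 12, f ⟨(k : ℕ) / 3, by have := k.isLt; omega⟩ ⟨(k : ℕ) % 3, by omega⟩ =
      ∑ c : Fin 4, ∑ r : Fin 3, f c r := by
  have hbij : Function.Bijective (fun p : Fin 4 × Fin 3 =>
      (⟨3 * (p.1 : ℕ) + (p.2 : ℕ), by
        have h1 := p.1.isLt; have h2 := p.2.isLt; omega⟩ : Fin 12)) := by
    constructor
    · rintro ⟨a1, a2⟩ ⟨b1, b2⟩ hab
      have h : 3 * (a1 : ℕ) + (a2 : ℕ) = 3 * (b1 : ℕ) + (b2 : ℕ) := congrArg Fin.val hab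
      have h1 := a1.isLt; have h2 := a2.isLt; have h3 := b1.isLt; have h4 := b2.isLt
      have hv : (a1 : ℕ) = (b1 : ℕ) ∧ (a2 : ℕ) = (b2 : ℕ) := by omega
      simp [Prod.ext_iff, Fin.ext_iff, hv.1, hv.2]
    · intro k
      have hk := k.isLt
      refine ⟨(⟨(k : ℕ) / 3, by omega⟩, ⟨(k : ℕ) % 3, by omega⟩), ?_⟩
      apply Fin.ext
      show 3 * ((k : ℕ) / 3) + (k : ℕ) % 3 = (k : ℕ)
      omega
  have key := Fintype.sum_bijective _ hbij
    (fun p : Fin 4 × Fin 3 => f p.1 p.2)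
    (fun k : Fin 12 => f ⟨(k : ℕ) / 3, by have := k.isLt; omega⟩ ⟨(k : ℕ) % 3, by omega⟩)
    (by
      rintro ⟨a, b⟩
      have h1 := a.isLt; have h2 := b.isLt
      beta_reduce
      congr 1
      · apply Fin.ext
        show (a : ℕ) = (3 * (a : ℕ) + (b : ℕ)) / 3
        omega
      · apply Fin.ext
        show (b : ℕ) = (3 * (a : ℕ) + (b : ℕ)) % 3
        omega)
  rw [← key]
  exact Fintype.sum_prod_type _

/-- Block decomposition of `B4 M *ᵥ vec4 x`. -/
lemma B4_mulVec (M : Fin 4 → Fin 4 → Matrix (Fin 3) (Fin 3) ℝ) (x : Fin 4 → Fin 3 → ℝ) :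
    B4 M *ᵥ vec4 x = vec4 fun b => ∑ c : Fin 4, M b c *ᵥ x c := by
  funext j
  show ∑ k : Fin 12, B4 M j k * vec4 x k = _
  simp only [B4, vec4]
  rw [sum_fin12 (fun c r =>
    M ⟨(j : ℕ) / 3, by have := j.isLt; omega⟩ c ⟨(j : ℕ) % 3, by omega⟩ r * x c r)]
  simp [vec4, Matrix.mulVec, dotProduct, Finset.sum_apply]

/-- Block decomposition of `H312 *ᵥ vec4 x`. -/
lemma H312_mulVec (x : Fin 4 → Fin 3 → ℝ) :
    H312 *ᵥ vec4 x =
      ∑ c : Fin 4, (![0, 0, -1, 1] : Fin 4 → Matrix (Fin 3) (Fin 3) ℝ) c *ᵥ x c := by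
  funext i
  show ∑ k : Fin 12, H312 i k * vec4 x k = _
  simp only [H312, vec4]
  rw [sum_fin12 (fun c r =>
    (![0, 0, -1, 1] : Fin 4 → Matrix (Fin 3) (Fin 3) ℝ) c i r * x c r)]
  simp [Matrix.mulVec, dotProduct, Finset.sum_apply]

lemma skew_mulVec_self (g : Fin 3 → ℝ) (α : ℝ) : skew g *ᵥ (α • g) = 0 := by
  funext i
  fin_cases i <;>
    simp [skew, Matrix.mulVec, dotProduct, Fin.sum_univ_succ] <;> ring

lemma vec4_zero : vec4 (fun _ => 0) = 0 := rfl

/-- **Unobservability of rotation about the gravity vector (yaw).** Orientation error in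
the direction of the gravity vector lies in the kernel of every row block
`H exp_m(A t)` of the observability matrix. -/
theorem yaw_unobservable (g : Fin 3 → ℝ) (t : ℝ) (α : ℝ) :
    H312 *ᵥ (NormedSpace.exp (t • A12 g) *ᵥ vec4 ![α • g, 0, 0, 0]) = 0 := by
  have hA : A12 g *ᵥ vec4 ![α • g, 0, 0, 0] = 0 := by
    rw [A12, B4_mulVec]
    have : (fun b => ∑ c : Fin 4,
        (![![0, 0, 0, 0], ![skew g, 0, 0, 0], ![0, 1, 0, 0], ![0, 0, 0, 0]] :
          Fin 4 → Fin 4 → Matrix (Fin 3) (Fin 3) ℝ) b c *ᵥ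
          (![α • g, 0, 0, 0] : Fin 4 → Fin 3 → ℝ) c) = fun _ => 0 := by
      funext b
      fin_cases b <;>
        simp [Fin.sum_univ_four, skew_mulVec_self]
    rw [this, vec4_zero]
  have hker : (t • A12 g) *ᵥ vec4 ![α • g, 0, 0, 0] = 0 := by
    rw [Matrix.smul_mulVec, hA, smul_zero]
  rw [exp_mulVec_of_kernel _ _ hker, H312_mulVec]
  simp [Fin.sum_univ_four]
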